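/- The poset B_{1_G}(k,n) is graded with rank function ρ(x) = Σ_{i=1}^k (x_i − 1): it has minimum (1,…,1), maximum (n,…,n), and whenever x ⋖ y is a covering relation in B_{1_G}(k,n), ρ(y) = ρ(x) + 1. -/

import Mathlib

/-- Action of a permutation on tuples: `g(x) = (x_{g⁻¹(1)},…,x_{g⁻¹(k)})`. -/
def act {k n : ℕ} (g : Equiv.Perm (Fin k)) (x : Fin k → Fin n) : Fin k → Fin n :=
  fun i => x (g⁻¹ i)

/-- `B_{1_G}(k,n)`: lexicographically minimal `G`-orbit representatives in `[n]^k`. -/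
def Btriv (k n : ℕ) (G : Subgroup (Equiv.Perm (Fin k))) : Set (Fin k → Fin n) :=
  {x | ∀ g : G, toLex x ≤ toLex (act (g : Equiv.Perm (Fin k)) x)}

lemma act_one {k n : ℕ} (x : Fin k → Fin n) : act 1 x = x := by
  funext i; simp [act]

lemma act_mul {k n : ℕ} (g h : Equiv.Perm (Fin k)) (x : Fin k → Fin n) :
    act (g * h) x = act g (act h x) := by
  funext i; simp [act, mul_inv_rev]

lemma act_sum {k n : ℕ} (g : Equiv.Perm (Fin k)) (x : Fin k → Fin n) :
    ∑ i, ((act g x i : ℕ)) = ∑ i, ((x i : ℕ)) :=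
  Fintype.sum_equiv g⁻¹ _ _ (fun _ => rfl)

/-- `B_{1_G}(k,n)` is graded with rank function `ρ(x) = Σᵢ (xᵢ - 1)` (here tuples with
entries in `{1,…,n}` are modeled by `Fin n`, so `ρ(x) = Σᵢ xᵢ`): it has minimum
`(1,…,1)`, maximum `(n,…,n)`, and covering relations raise the rank by exactly one. -/
theorem stmt3 (k n : ℕ) (hn : 0 < n) (G : Subgroup (Equiv.Perm (Fin k)))
    (r : (Fin k → Fin n) → (Fin k → Fin n) → Prop)
    (hr : ∀ x y, r x y ↔ ∃ g : G, ∀ i, x i ≤ act (g : Equiv.Perm (Fin k)) y i)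
    (bot top : Fin k → Fin n)
    (hbot : bot = fun _ => (⟨0, hn⟩ : Fin n))
    (htop : top = fun _ => (⟨n - 1, by omega⟩ : Fin n)) :
    (bot ∈ Btriv k n G ∧ ∀ x ∈ Btriv k n G, r bot x) ∧
    (top ∈ Btriv k n G ∧ ∀ x ∈ Btriv k n G, r x top) ∧
    (∀ x ∈ Btriv k n G, ∀ y ∈ Btriv k n G,
      r x y → x ≠ y → (¬ ∃ z ∈ Btriv k n G, z ≠ x ∧ z ≠ y ∧ r x z ∧ r z y) →
      (∑ i, ((y i : ℕ))) = (∑ i, ((x i : ℕ))) + 1) := by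
  refine ⟨⟨?_, ?_⟩, ⟨?_, ?_⟩, ?_⟩
  · intro g
    have : act (g : Equiv.Perm (Fin k)) bot = bot := by funext i; simp [act, hbot]
    rw [this]
  · intro x hx
    refine (hr _ _).2 ⟨1, fun i => ?_⟩
    have : ((1 : G) : Equiv.Perm (Fin k)) = 1 := rfl
    rw [this, act_one]
    simp [hbot, Fin.le_def]
  · intro g
    have : act (g : Equiv.Perm (Fin k)) top = top := by funext i; simp [act, htop]
    rw [this]
  · intro x hx
    refine (hr _ _).2 ⟨1, fun i => ?_⟩
    have h1 : ((1 : G) : Equiv.Perm (Fin k)) = 1 := rfl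
    rw [h1, act_one]
    simp only [htop, Fin.le_def]
    have := (x i).isLt
    omega
  · intro x hx y hy hrxy hne hnoz
    obtain ⟨g, hg⟩ := (hr x y).1 hrxy
    set y' := act (g : Equiv.Perm (Fin k)) y with hy'
    have hsum' : ∑ i, ((y' i : ℕ)) = ∑ i, ((y i : ℕ)) := act_sum _ _
    have hxy' : x ≠ y' := by
      intro h
      apply hne
      have h1 : act ((g : Equiv.Perm (Fin k))⁻¹) x = y := by
        rw [h, hy', ← act_mul, inv_mul_cancel, act_one]
      have h2 : toLex y ≤ toLex x := by
        have := hy g; rw [← hy', ← h] at this; exact this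
      have h3 : toLex x ≤ toLex y := by
        have := hx ⟨(g : Equiv.Perm (Fin k))⁻¹, G.inv_mem g.2⟩
        rw [show (((⟨(g : Equiv.Perm (Fin k))⁻¹, G.inv_mem g.2⟩ : G)) : Equiv.Perm (Fin k)) = (g : Equiv.Perm (Fin k))⁻¹ from rfl, h1] at this
        exact this
      exact toLex.injective (le_antisymm h3 h2)
    have hex : ∃ i, (x i : ℕ) < (y' i : ℕ) := by
      by_contra hc
      push_neg at hc
      exact hxy' (funext fun i => le_antisymm (hg i) (by rw [Fin.le_def]; exact hc i))
    obtain ⟨i, hi⟩ := hex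
    have hlt : ∑ j, ((x j : ℕ)) < ∑ j, ((y' j : ℕ)) :=
      Finset.sum_lt_sum (fun j _ => hg j) ⟨i, Finset.mem_univ i, hi⟩
    by_contra hcon
    have hge2 : ∑ j, ((x j : ℕ)) + 2 ≤ ∑ j, ((y' j : ℕ)) := by omega
    -- build intermediate element
    have hwlt : (y' i : ℕ) - 1 < n := by have := (y' i).isLt; omega
    set w : Fin k → Fin n := Function.update y' i ⟨(y' i : ℕ) - 1, hwlt⟩ with hw
    have hwj : ∀ j, j ≠ i → w j = y' j := fun j hj => Function.update_of_ne hj _ _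
    have hwi : (w i : ℕ) = (y' i : ℕ) - 1 := by rw [hw, Function.update_self]
    have hxw : ∀ j, x j ≤ w j := by
      intro j
      by_cases hji : j = i
      · subst hji; rw [Fin.le_def, hwi]; omega
      · rw [hwj j hji]; exact hg j
    have hwy' : ∀ j, w j ≤ y' j := by
      intro j
      by_cases hji : j = i
      · subst hji; rw [Fin.le_def, hwi]; omega
      · rw [hwj j hji]
    have hsumw : ∑ j, ((w j : ℕ)) + 1 = ∑ j, ((y' j : ℕ)) := by
      have h1 := Finset.add_sum_erase Finset.univ (fun j => ((w j : ℕ))) (Finset.mem_univ i)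
      have h2 := Finset.add_sum_erase Finset.univ (fun j => ((y' j : ℕ))) (Finset.mem_univ i)
      have h3 : ∑ j ∈ Finset.univ.erase i, ((w j : ℕ)) = ∑ j ∈ Finset.univ.erase i, ((y' j : ℕ)) :=
        Finset.sum_congr rfl (fun j hj => by rw [hwj j (Finset.ne_of_mem_erase hj)])
      omega
    -- minimize over the orbit of w
    letI : LinearOrder (Lex (Fin k → Fin n)) :=
      @Pi.Lex.linearOrder (Fin k) (fun _ => Fin n) inferInstance
        (inferInstanceAs (WellFoundedLT (Fin k))) inferInstance
    obtain ⟨h₀, hmin⟩ := Finite.exists_min (fun h : G => toLex (act (h : Equiv.Perm (Fin k)) w))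
    set z := act (h₀ : Equiv.Perm (Fin k)) w with hz
    have hsumz : ∑ j, ((z j : ℕ)) = ∑ j, ((w j : ℕ)) := act_sum _ _
    apply hnoz
    refine ⟨z, ?_, ?_, ?_, ?_, ?_⟩
    · intro g'
      have : act (g' : Equiv.Perm (Fin k)) z = act ((g' * h₀ : G) : Equiv.Perm (Fin k)) w := by
        rw [hz, ← act_mul]; rfl
      rw [this]
      exact hmin (g' * h₀)
    · intro h
      have : ∑ j, ((z j : ℕ)) = ∑ j, ((x j : ℕ)) := by rw [h]
      omega
    · intro h
      have : ∑ j, ((z j : ℕ)) = ∑ j, ((y j : ℕ)) := by rw [h]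
      omega
    · refine (hr _ _).2 ⟨h₀⁻¹, fun j => ?_⟩
      have : act ((h₀⁻¹ : G) : Equiv.Perm (Fin k)) z = w := by
        rw [hz, ← act_mul]
        have : ((h₀⁻¹ : G) : Equiv.Perm (Fin k)) * (h₀ : Equiv.Perm (Fin k)) = 1 := by
          rw [show ((h₀⁻¹ : G) : Equiv.Perm (Fin k)) = (h₀ : Equiv.Perm (Fin k))⁻¹ from rfl,
            inv_mul_cancel]
        rw [this, act_one]
      rw [this]
      exact hxw j
    · refine (hr _ _).2 ⟨h₀ * g, fun j => ?_⟩
      have : act ((h₀ * g : G) : Equiv.Perm (Fin k)) y = act (h₀ : Equiv.Perm (Fin k)) y' := by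
        rw [hy', ← act_mul]; rfl
      rw [this]
      exact hwy' _
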